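/- Lemma: For every N ≥ 1 and every ξ₀,…,ξ_{N-1} ∈ ℕ₀ such that the cylinder W := [ξ₀,…,ξ_{N-1}] satisfies ℙ⁻(W) > 0, one has lim_{n→∞} ℙ⁻(Σ_n^W) = 0. -/

import Mathlib

open MeasureTheory Filter Topology Set
open scoped BigOperators

noncomputable section

/-- Tail sum ∑_{j ≥ i} p_j. -/
def tailSum (p : ℕ → ℝ) (i : ℕ) : ℝ := ∑' j : ℕ, p (i + j)

/-- Invariant distribution m_i = (∑_{j≥i} p_j)/(1+E). -/
def mdist (p : ℕ → ℝ) (E : ℝ) (i : ℕ) : ℝ := tailSum p i / (1 + E)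

/-- Transition matrix entries: p_{0j} = p_j, p_{(k+1)k} = 1, else 0. -/
def Ptrans (p : ℕ → ℝ) (i j : ℕ) : ℝ := if i = 0 then p j else if i = j + 1 then 1 else 0

/-- Reversed transition matrix q_{ij} = (m_j / m_i) · p_{ji}. -/
def qtrans (p : ℕ → ℝ) (E : ℝ) (i j : ℕ) : ℝ := mdist p E j / mdist p E i * Ptrans p j i

/-- Cylinder set of length n determined by the first n values of ξ. -/
def cyl (ξ : ℕ → ℕ) (n : ℕ) : Set (ℕ → ℕ) := {ω | ∀ i < n, ω i = ξ i}

/-- Probability assigned by ℙ⁻ to the cylinder [ξ₀,…,ξ_{n-1}]. -/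
def cylProbQ (p : ℕ → ℝ) (E : ℝ) (ξ : ℕ → ℕ) (n : ℕ) : ℝ :=
  mdist p E (ξ 0) * ∏ i ∈ Finset.range (n - 1), qtrans p E (ξ i) (ξ (i + 1))

/-- Probability assigned by ℙ to the cylinder [ξ₀,…,ξ_{n-1}]. -/
def cylProbP (p : ℕ → ℝ) (E : ℝ) (ξ : ℕ → ℕ) (n : ℕ) : ℝ :=
  mdist p E (ξ 0) * ∏ i ∈ Finset.range (n - 1), Ptrans p (ξ i) (ξ (i + 1))

/-- The family f₀ = g, f_k = f for k ≥ 1. -/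
def fseq (a b : ℝ) (g f : Set.Icc a b → Set.Icc a b) : ℕ → Set.Icc a b → Set.Icc a b :=
  fun k => if k = 0 then g else f

/-- itf fI ξ n = f_{ξ₀} ∘ f_{ξ₁} ∘ ⋯ ∘ f_{ξ_{n-1}}. -/
def itf (a b : ℝ) (fI : ℕ → Set.Icc a b → Set.Icc a b) (ξ : ℕ → ℕ) :
    ℕ → Set.Icc a b → Set.Icc a b
  | 0 => id
  | n + 1 => fun x => itf a b fI ξ n (fI (ξ n) x)

/-- itfRev fI a n = f_{a_{n-1}} ∘ ⋯ ∘ f_{a_0}  (i.e. f_{a_n}∘⋯∘f_{a_1} with 1-based indexing). -/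
def itfRev (a b : ℝ) (fI : ℕ → Set.Icc a b → Set.Icc a b) (c : ℕ → ℕ) :
    ℕ → Set.Icc a b → Set.Icc a b
  | 0 => id
  | n + 1 => fun x => fI (c n) (itfRev a b fI c n x)

/-- I_ξ = ⋂_{n ≥ 1} (f_{ξ₀}∘⋯∘f_{ξ_{n-1}})(I). -/
def Iset (a b : ℝ) (fI : ℕ → Set.Icc a b → Set.Icc a b) (ξ : ℕ → ℕ) : Set (Set.Icc a b) :=
  ⋂ n : ℕ, itf a b fI ξ (n + 1) '' Set.univ

/-- S = {ξ : diam I_ξ = 0}. -/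
def Sset (a b : ℝ) (fI : ℕ → Set.Icc a b → Set.Icc a b) : Set (ℕ → ℕ) :=
  {ξ | EMetric.diam (Iset a b fI ξ) = 0}

/-- The j-th sliceM of a measure on ℕ × I:  μ_j(C) = μ̂({j} × C). -/
def sliceM (a b : ℝ) (μ : Measure (ℕ × Set.Icc a b)) (k : ℕ) : Measure (Set.Icc a b) :=
  Measure.map Prod.snd (μ.restrict ({k} ×ˢ (Set.univ : Set (Set.Icc a b))))

/-- The Markov operator T:  (Tμ̂)({j}×C) = μ_{j+1}(f_j⁻¹ C) + p_j·μ₀(f_j⁻¹ C). -/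
def TOp (a b : ℝ) (p : ℕ → ℝ) (fI : ℕ → Set.Icc a b → Set.Icc a b)
    (μ : Measure (ℕ × Set.Icc a b)) : Measure (ℕ × Set.Icc a b) :=
  Measure.sum fun j =>
    Measure.map (fun x => (j, fI j x))
      (sliceM a b μ (j + 1) + ENNReal.ofReal (p j) • sliceM a b μ 0)

/-- Extend ξ : Fin n → ℕ to ℕ → ℕ by 0. -/
def padSeq {n : ℕ} (ξ : Fin n → ℕ) : ℕ → ℕ := fun i => if h : i < n then ξ ⟨i, h⟩ else 0

/-- S_nˣ = {ξ : x ∈ I_ξⁿ}. -/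
def SnX (a b : ℝ) (fI : ℕ → Set.Icc a b → Set.Icc a b) (x : Set.Icc a b) (n : ℕ) :
    Set (ℕ → ℕ) :=
  {ξ | x ∈ itf a b fI ξ n '' Set.univ}

/-- Σ_n^W = {ω : σ^{iN}(ω) ∉ W for i = 0,…,n-1}, for W the cylinder [ξ₀,…,ξ_{N-1}]. -/
def SigW (ξ : ℕ → ℕ) (N n : ℕ) : Set (ℕ → ℕ) :=
  {ω | ∀ i < n, ¬ (∀ k < N, ω (i * N + k) = ξ k)}

open Classical in
/-- The block-replacement map H_n: replace every length-N block equal to (ξ₀,…,ξ_{N-1})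
by (η₀,…,η_{N-1}). -/
noncomputable def Hn (ξ η : ℕ → ℕ) (N : ℕ) (c : ℕ → ℕ) : ℕ → ℕ :=
  fun i => if (∀ k < N, c (i / N * N + k) = ξ k) then η (i % N) else c i

/-- The splitting condition. -/
def Splitting (a b : ℝ) (fI : ℕ → Set.Icc a b → Set.Icc a b) (P : Measure (ℕ → ℕ)) : Prop :=
  ∃ (l r : ℕ) (c d : ℕ → ℕ), 1 ≤ l ∧ 1 ≤ r ∧
    0 < P (cyl c l) ∧ 0 < P (cyl d r) ∧ c (l - 1) = d (r - 1) ∧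
    (itfRev a b fI c l '' Set.univ) ∩ (itfRev a b fI d r '' Set.univ) = ∅

-- auxiliary defs
def wseq (j : ℕ) (u : ℕ → ℕ) : ℕ → ℕ := fun r => match r with
  | 0 => j
  | r + 1 => u r

def contEv (L : ℕ) (u : ℕ → ℕ) (len : ℕ) : Set (ℕ → ℕ) := {ω | ∀ r < len, ω (L + r) = u r}

lemma summable_shift {p : ℕ → ℝ} (hp1 : Summable p) (i : ℕ) : Summable fun j => p (i + j) := by
  simpa [add_comm] using (summable_nat_add_iff i).mpr hp1

lemma tailSum_pos {p : ℕ → ℝ} (hp : ∀ n, 0 ≤ p n) (hp1 : Summable p)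
    (hsupp : ∀ N : ℕ, ∃ n, N ≤ n ∧ 0 < p n) (i : ℕ) : 0 < tailSum p i := by
  obtain ⟨n, hn, hpn⟩ := hsupp i
  have h : p (i + (n - i)) = p n := by congr 1; omega
  calc (0:ℝ) < p n := hpn
    _ = p (i + (n - i)) := h.symm
    _ ≤ tailSum p i := Summable.le_tsum (summable_shift hp1 i) _ fun j _ => hp _

lemma measurableSet_forall_coord (g : ℕ → ℕ) (idx : ℕ → ℕ) (len : ℕ) :
    MeasurableSet {ω : ℕ → ℕ | ∀ k < len, ω (idx k) = g k} := by
  have : {ω : ℕ → ℕ | ∀ k < len, ω (idx k) = g k}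
      = ⋂ (k : ℕ) (_ : k < len), (fun ω : ℕ → ℕ => ω (idx k)) ⁻¹' {g k} := by
    ext ω; simp
  rw [this]
  exact MeasurableSet.iInter fun k => MeasurableSet.iInter fun _ =>
    measurable_pi_apply (idx k) (measurableSet_singleton _)

lemma measurableSet_cyl (ξ : ℕ → ℕ) (n : ℕ) : MeasurableSet (cyl ξ n) :=
  measurableSet_forall_coord ξ id n

lemma measurableSet_contEv (L : ℕ) (u : ℕ → ℕ) (len : ℕ) : MeasurableSet (contEv L u len) :=
  measurableSet_forall_coord u (fun k => L + k) len

lemma disjoint_cyl_of_ne {w w' : ℕ → ℕ} {L i : ℕ} (hi : i < L) (h : w i ≠ w' i) :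
    Disjoint (cyl w L) (cyl w' L) := by
  rw [Set.disjoint_left]
  intro ω hw hw'
  exact h ((hw i hi).symm.trans (hw' i hi))

lemma set_eq_iUnion_cyl (L : ℕ) (A : Set (ℕ → ℕ))
    (hAdet : ∀ ω ω' : ℕ → ℕ, (∀ i < L, ω i = ω' i) → ω ∈ A → ω' ∈ A) :
    A = ⋃ b : {b : Fin L → ℕ // padSeq b ∈ A}, cyl (padSeq b.1) L := by
  ext ω
  constructor
  · intro hω
    have hb : padSeq (fun i : Fin L => ω i.1) ∈ A := by
      refine hAdet ω _ (fun i hi => ?_) hω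
      simp [padSeq, hi]
    refine Set.mem_iUnion.2 ⟨⟨_, hb⟩, fun i hi => ?_⟩
    simp [padSeq, hi]
  · intro h
    obtain ⟨⟨b, hb⟩, hω⟩ := Set.mem_iUnion.1 h
    exact hAdet _ _ (fun i hi => (hω i hi).symm) hb


lemma cylProbQ_append (p : ℕ → ℝ) (E : ℝ) (L : ℕ) (hL : 1 ≤ L) (len : ℕ)
    (w u : ℕ → ℕ) (j : ℕ) (hwj : w (L - 1) = j)
    (c : ℕ → ℕ) (hc1 : ∀ i < L, c i = w i) (hc2 : ∀ r, c (L + r) = u r) :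
    cylProbQ p E c (L + len) = cylProbQ p E w L *
      ∏ r ∈ Finset.range len, qtrans p E (wseq j u r) (wseq j u (r + 1)) := by
  unfold cylProbQ
  have h1 : L + len - 1 = (L - 1) + len := by omega
  rw [h1, Finset.prod_range_add]
  have hc0 : c 0 = w 0 := hc1 0 (by omega)
  rw [hc0]
  have e1 : ∏ i ∈ Finset.range (L - 1), qtrans p E (c i) (c (i + 1))
      = ∏ i ∈ Finset.range (L - 1), qtrans p E (w i) (w (i + 1)) := by
    refine Finset.prod_congr rfl fun i hi => ?_
    rw [Finset.mem_range] at hi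
    rw [hc1 i (by omega), hc1 (i + 1) (by omega)]
  have e2 : ∏ r ∈ Finset.range len, qtrans p E (c (L - 1 + r)) (c (L - 1 + r + 1))
      = ∏ r ∈ Finset.range len, qtrans p E (wseq j u r) (wseq j u (r + 1)) := by
    refine Finset.prod_congr rfl fun r _ => ?_
    have hb : c (L - 1 + r + 1) = u r := by
      have : L - 1 + r + 1 = L + r := by omega
      rw [this, hc2]
    have ha : c (L - 1 + r) = wseq j u r := by
      match r with
      | 0 => simpa [wseq] using (hc1 (L - 1) (by omega)).trans hwj
      | r' + 1 =>
        have : L - 1 + (r' + 1) = L + r' := by omega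
        rw [this, hc2]; rfl
    rw [ha, hb]; rfl
  rw [e1, e2, mul_assoc]

lemma cond_prob (p : ℕ → ℝ) (E : ℝ)
    (hcq : ∀ (ξ : ℕ → ℕ) (n : ℕ), 0 ≤ cylProbQ p E ξ n)
    (Pm : Measure (ℕ → ℕ))
    (hPm : ∀ n, 1 ≤ n → ∀ ξ : ℕ → ℕ, Pm (cyl ξ n) = ENNReal.ofReal (cylProbQ p E ξ n))
    (L : ℕ) (hL : 1 ≤ L) (A : Set (ℕ → ℕ))
    (hAdet : ∀ ω ω' : ℕ → ℕ, (∀ i < L, ω i = ω' i) → ω ∈ A → ω' ∈ A)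
    (j : ℕ) (hAj : ∀ ω ∈ A, ω (L - 1) = j)
    (u : ℕ → ℕ) (len : ℕ) :
    Pm (A ∩ contEv L u len)
      = Pm A * ENNReal.ofReal
          (∏ r ∈ Finset.range len, qtrans p E (wseq j u r) (wseq j u (r + 1))) := by
  classical
  set R : ℝ := ∏ r ∈ Finset.range len, qtrans p E (wseq j u r) (wseq j u (r + 1)) with hR
  set c : {b : Fin L → ℕ // padSeq b ∈ A} → ℕ → ℕ :=
    fun b i => if h : i < L then padSeq b.1 i else u (i - L) with hcdef
  have hA := set_eq_iUnion_cyl L A hAdet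
  -- pieces intersected with contEv are cylinders
  have hpiece : ∀ b : {b : Fin L → ℕ // padSeq b ∈ A},
      cyl (padSeq b.1) L ∩ contEv L u len = cyl (c b) (L + len) := by
    intro b
    ext ω
    constructor
    · rintro ⟨h1, h2⟩ i hi
      by_cases hiL : i < L
      · simp only [hcdef, hiL, dif_pos]
        exact h1 i hiL
      · simp only [hcdef, hiL, dif_neg, not_false_iff]
        have h3 := h2 (i - L) (by omega)
        have : L + (i - L) = i := by omega
        rwa [this] at h3
    · intro h
      constructor
      · intro i hi
        have := h i (by omega)
        simpa only [hcdef, hi, dif_pos] using this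
      · intro r hr
        have := h (L + r) (by omega)
        simpa only [hcdef, show ¬ (L + r < L) by omega, dif_neg, not_false_iff,
          show L + r - L = r by omega] using this
  -- disjointness of the pieces
  have hdis : Pairwise (Function.onFun Disjoint fun b : {b : Fin L → ℕ // padSeq b ∈ A} =>
      cyl (c b) (L + len)) := by
    intro b b' hbb
    have hne : b.1 ≠ b'.1 := fun h => hbb (Subtype.ext h)
    obtain ⟨i, hi⟩ := Function.ne_iff.1 hne
    refine disjoint_cyl_of_ne (i := i.1) (by omega) ?_
    simp only [hcdef, i.2, dif_pos, padSeq]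
    simpa [padSeq] using fun h => hi (by exact h)
  have hdisL : Pairwise (Function.onFun Disjoint fun b : {b : Fin L → ℕ // padSeq b ∈ A} =>
      cyl (padSeq b.1) L) := by
    intro b b' hbb
    have hne : b.1 ≠ b'.1 := fun h => hbb (Subtype.ext h)
    obtain ⟨i, hi⟩ := Function.ne_iff.1 hne
    refine disjoint_cyl_of_ne (i := i.1) i.2 ?_
    simpa [padSeq] using fun h => hi (by exact h)
  have hAI : A ∩ contEv L u len = ⋃ b : {b : Fin L → ℕ // padSeq b ∈ A}, cyl (c b) (L + len) := by
    have h1 : A ∩ contEv L u len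
        = (⋃ b : {b : Fin L → ℕ // padSeq b ∈ A}, cyl (padSeq b.1) L) ∩ contEv L u len :=
      congrArg (· ∩ contEv L u len) hA
    rw [h1, Set.iUnion_inter]
    exact Set.iUnion_congr hpiece
  rw [hAI, measure_iUnion hdis (fun b => measurableSet_cyl _ _)]
  have hterm : ∀ b : {b : Fin L → ℕ // padSeq b ∈ A},
      Pm (cyl (c b) (L + len)) = Pm (cyl (padSeq b.1) L) * ENNReal.ofReal R := by
    intro b
    rw [hPm _ (by omega), hPm _ hL]
    rw [cylProbQ_append p E L hL len (padSeq b.1) u j (hAj _ b.2) (c b)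
      (fun i hi => by simp [hcdef, hi]) (fun r => by
        simp [hcdef, show ¬ (L + r < L) by omega, show L + r - L = r by omega])]
    rw [ENNReal.ofReal_mul (hcq _ _)]
  calc ∑' b, Pm (cyl (c b) (L + len))
      = ∑' b : {b : Fin L → ℕ // padSeq b ∈ A}, Pm (cyl (padSeq b.1) L) * ENNReal.ofReal R := by
        exact tsum_congr hterm
    _ = (∑' b : {b : Fin L → ℕ // padSeq b ∈ A}, Pm (cyl (padSeq b.1) L)) * ENNReal.ofReal R :=
        ENNReal.tsum_mul_right
    _ = Pm A * ENNReal.ofReal R := by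
        rw [← measure_iUnion hdisL (fun b => measurableSet_cyl _ _)]
        exact congrArg (· * ENNReal.ofReal R) (congrArg Pm hA.symm)


lemma measurableSet_coordEq (k s : ℕ) : MeasurableSet {ω : ℕ → ℕ | ω k = s} := by
  have : {ω : ℕ → ℕ | ω k = s} = (fun ω : ℕ → ℕ => ω k) ⁻¹' {s} := by ext ω; simp
  rw [this]
  exact measurable_pi_apply k (measurableSet_singleton s)

lemma stat_sum (p : ℕ → ℝ) (E : ℝ) (hp : ∀ n, 0 ≤ p n) (hp1 : HasSum p 1)
    (hm : ∀ i, 0 < mdist p E i) (s : ℕ) :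
    ∑' j : ℕ, ENNReal.ofReal (mdist p E j * qtrans p E j s) = ENNReal.ofReal (mdist p E s) := by
  have hmq : ∀ j, mdist p E j * qtrans p E j s = mdist p E s * Ptrans p s j := by
    intro j
    have hj := (hm j).ne'
    unfold qtrans
    field_simp
  simp only [hmq]
  match s with
  | 0 =>
    have hP : ∀ j, Ptrans p 0 j = p j := fun j => by simp [Ptrans]
    simp only [hP]
    have h1 : ∀ j, ENNReal.ofReal (mdist p E 0 * p j)
        = ENNReal.ofReal (mdist p E 0) * ENNReal.ofReal (p j) := fun j =>
      ENNReal.ofReal_mul (hm 0).le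
    simp only [h1]
    rw [ENNReal.tsum_mul_left]
    have h2 : ∑' j, ENNReal.ofReal (p j) = ENNReal.ofReal (∑' j, p j) :=
      (ENNReal.ofReal_tsum_of_nonneg hp hp1.summable).symm
    rw [h2, hp1.tsum_eq]
    simp
  | t + 1 =>
    rw [tsum_eq_single t]
    · simp [Ptrans]
    · intro j hj
      have : Ptrans p (t + 1) j = 0 := by
        simp only [Ptrans, if_neg (Nat.succ_ne_zero t)]
        rw [if_neg]
        omega
      rw [this, mul_zero, ENNReal.ofReal_zero]

lemma marginal (p : ℕ → ℝ) (E : ℝ) (hp : ∀ n, 0 ≤ p n) (hp1 : HasSum p 1)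
    (hm : ∀ i, 0 < mdist p E i)
    (hcq : ∀ (ξ : ℕ → ℕ) (n : ℕ), 0 ≤ cylProbQ p E ξ n)
    (Pm : Measure (ℕ → ℕ))
    (hPm : ∀ n, 1 ≤ n → ∀ ξ : ℕ → ℕ, Pm (cyl ξ n) = ENNReal.ofReal (cylProbQ p E ξ n))
    (k s : ℕ) : Pm {ω : ℕ → ℕ | ω k = s} = ENNReal.ofReal (mdist p E s) := by
  induction k generalizing s with
  | zero =>
    have hset : {ω : ℕ → ℕ | ω 0 = s} = cyl (fun _ => s) 1 := by
      ext ω; simp [cyl, Nat.lt_one_iff]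
    rw [hset, hPm 1 le_rfl]
    simp [cylProbQ]
  | succ k ih =>
    have hset : {ω : ℕ → ℕ | ω (k + 1) = s}
        = ⋃ j : ℕ, ({ω : ℕ → ℕ | ω k = j} ∩ contEv (k + 1) (fun _ => s) 1) := by
      ext ω
      constructor
      · intro h
        refine Set.mem_iUnion.2 ⟨ω k, rfl, fun r hr => ?_⟩
        have : r = 0 := by omega
        subst this
        exact h
      · intro h
        obtain ⟨j, _, h2⟩ := Set.mem_iUnion.1 h
        simpa using h2 0 (by omega)
    have hmeas : ∀ j : ℕ, MeasurableSet ({ω : ℕ → ℕ | ω k = j} ∩ contEv (k + 1) (fun _ => s) 1) :=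
      fun j => (measurableSet_coordEq k j).inter (measurableSet_contEv _ _ _)
    have hdisj : Pairwise (Function.onFun Disjoint fun j : ℕ =>
        {ω : ℕ → ℕ | ω k = j} ∩ contEv (k + 1) (fun _ => s) 1) := by
      intro j j' hjj
      refine Set.disjoint_left.2 fun ω h1 h2 => hjj ?_
      exact h1.1.symm.trans h2.1
    rw [hset, measure_iUnion hdisj hmeas]
    have hterm : ∀ j : ℕ, Pm ({ω : ℕ → ℕ | ω k = j} ∩ contEv (k + 1) (fun _ => s) 1)
        = ENNReal.ofReal (mdist p E j * qtrans p E j s) := by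
      intro j
      rw [cond_prob p E hcq Pm hPm (k + 1) (by omega) _
        (fun ω ω' hag h => by
          have := hag k (by omega)
          simp only [Set.mem_setOf_eq] at h ⊢
          rw [← this]; exact h)
        j (fun ω h => by simpa using h)
        (fun _ => s) 1, ih j]
      have hprod : ∏ r ∈ Finset.range 1,
          qtrans p E (wseq j (fun _ => s) r) (wseq j (fun _ => s) (r + 1)) = qtrans p E j s := by
        simp [wseq]
      rw [hprod, ← ENNReal.ofReal_mul (hm j).le]
    calc ∑' j, Pm ({ω : ℕ → ℕ | ω k = j} ∩ contEv (k + 1) (fun _ => s) 1)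
        = ∑' j : ℕ, ENNReal.ofReal (mdist p E j * qtrans p E j s) := tsum_congr hterm
      _ = ENNReal.ofReal (mdist p E s) := stat_sum p E hp hp1 hm s


/-- The engineered path: climb from s+1 up to S, reset to 0, wait at 0,
then climb to ξ 0 so as to start the ξ-block exactly at position B. -/
def pathv (ξ : ℕ → ℕ) (B S s : ℕ) : ℕ → ℕ := fun r =>
  if r < S - s then s + 1 + r
  else if r < B - ξ 0 then 0
  else if r < B then r - (B - ξ 0)
  else ξ (r - B)

lemma path_end (ξ : ℕ → ℕ) (B S s : ℕ) (hB : ξ 0 + S + 1 ≤ B) (k : ℕ) :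
    pathv ξ B S s (B + k) = ξ k := by
  unfold pathv
  rw [if_neg (by omega), if_neg (by omega), if_neg (by omega)]
  congr 1
  omega

lemma path_step (ξ : ℕ → ℕ) (N : ℕ) (hN : 1 ≤ N) (B S s : ℕ) (hs : s ≤ S)
    (hB : ξ 0 + S + 1 ≤ B)
    (r : ℕ) (hr : r < B + N) :
    (wseq s (pathv ξ B S s) (r + 1) = wseq s (pathv ξ B S s) r + 1)
    ∨ (wseq s (pathv ξ B S s) r = S ∧ wseq s (pathv ξ B S s) (r + 1) = 0)
    ∨ (wseq s (pathv ξ B S s) r = 0 ∧ wseq s (pathv ξ B S s) (r + 1) = 0)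
    ∨ (∃ k, k < N - 1 ∧ wseq s (pathv ξ B S s) r = ξ k
        ∧ wseq s (pathv ξ B S s) (r + 1) = ξ (k + 1)) := by
  have hc0ge : S + 1 ≤ B - ξ 0 := by omega
  match r with
  | 0 =>
    by_cases h : s < S
    · left
      show pathv ξ B S s 0 = s + 1
      unfold pathv
      rw [if_pos (by omega)]
    · right; left
      have hsS : s = S := by omega
      refine ⟨hsS, ?_⟩
      show pathv ξ B S s 0 = 0
      unfold pathv
      rw [if_neg (by omega), if_pos (by omega)]
  | t + 1 =>
    have hw1 : wseq s (pathv ξ B S s) (t + 1) = pathv ξ B S s t := rfl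
    have hw2 : wseq s (pathv ξ B S s) (t + 2) = pathv ξ B S s (t + 1) := rfl
    rw [hw1, hw2]
    rcases lt_trichotomy (t + 1) (S - s) with h1 | h1 | h1
    · left
      unfold pathv
      rw [if_pos (by omega), if_pos (by omega)]
      omega
    · right; left
      constructor
      · unfold pathv
        rw [if_pos (by omega)]
        omega
      · unfold pathv
        rw [if_neg (by omega), if_pos (by omega)]
    · -- S - s ≤ t
      rcases le_or_gt (t + 1) (B - ξ 0) with h2 | h2
      · right; right; left
        constructor
        · unfold pathv
          rw [if_neg (by omega), if_pos (by omega)]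
        · unfold pathv
          rw [if_neg (by omega)]
          by_cases h3 : t + 1 < B - ξ 0
          · rw [if_pos h3]
          · rw [if_neg h3]
            by_cases h4 : t + 1 < B
            · rw [if_pos h4]
              omega
            · rw [if_neg h4]
              have h5 : t + 1 - B = 0 := by omega
              rw [h5]
              omega
      · -- B - ξ 0 ≤ t
        rcases lt_trichotomy (t + 1) B with h3 | h3 | h3
        · left
          unfold pathv
          rw [if_neg (by omega), if_neg (by omega), if_pos (by omega),
            if_neg (by omega), if_neg (by omega), if_pos (by omega)]
          omega
        · left
          have hage : 1 ≤ ξ 0 := by omega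
          unfold pathv
          rw [if_neg (by omega), if_neg (by omega), if_neg (by omega),
            if_neg (by omega), if_neg (by omega), if_pos (by omega)]
          have h5 : t + 1 - B = 0 := by omega
          rw [h5]
          omega
        · right; right; right
          refine ⟨t - B, by omega, ?_, ?_⟩
          · unfold pathv
            rw [if_neg (by omega), if_neg (by omega), if_neg (by omega)]
          · unfold pathv
            rw [if_neg (by omega), if_neg (by omega), if_neg (by omega)]
            congr 1
            omega

lemma path_pos (p : ℕ → ℝ) (E : ℝ)
    (hqup : ∀ i, 0 < qtrans p E i (i + 1))
    (hqz : ∀ i, 0 < p i → 0 < qtrans p E i 0)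
    (hp0 : 0 < p 0)
    (N : ℕ) (hN : 1 ≤ N) (ξ : ℕ → ℕ)
    (hqξ : ∀ k, k < N - 1 → 0 < qtrans p E (ξ k) (ξ (k + 1)))
    (B S : ℕ) (hB : ξ 0 + S + 1 ≤ B) (hpS : 0 < p S)
    (s : ℕ) (hs : s ≤ S) :
    0 < ∏ r ∈ Finset.range (B + N),
      qtrans p E (wseq s (pathv ξ B S s) r) (wseq s (pathv ξ B S s) (r + 1)) := by
  apply Finset.prod_pos
  intro r hr
  rw [Finset.mem_range] at hr
  rcases path_step ξ N hN B S s hs hB r hr with h | ⟨h1, h2⟩ | ⟨h1, h2⟩ | ⟨k, hk, h1, h2⟩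
  · rw [h]; exact hqup _
  · rw [h1, h2]; exact hqz S hpS
  · rw [h1, h2]; exact hqz 0 hp0
  · rw [h1, h2]; exact hqξ k hk


lemma tsum_marg (p : ℕ → ℝ) (E : ℝ) (hp : ∀ n, 0 ≤ p n) (hp1 : HasSum p 1)
    (hm : ∀ i, 0 < mdist p E i)
    (hcq : ∀ (ξ : ℕ → ℕ) (n : ℕ), 0 ≤ cylProbQ p E ξ n)
    (Pm : Measure (ℕ → ℕ)) [IsProbabilityMeasure Pm]
    (hPm : ∀ n, 1 ≤ n → ∀ ξ : ℕ → ℕ, Pm (cyl ξ n) = ENNReal.ofReal (cylProbQ p E ξ n)) :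
    ∑' s : ℕ, ENNReal.ofReal (mdist p E s) = 1 := by
  have huniv : (Set.univ : Set (ℕ → ℕ)) = ⋃ s : ℕ, {ω : ℕ → ℕ | ω 0 = s} := by
    ext ω; simp
  have hdisj : Pairwise (Function.onFun Disjoint fun s : ℕ => {ω : ℕ → ℕ | ω 0 = s}) := by
    intro s s' h
    exact Set.disjoint_left.2 fun ω h1 h2 => h (h1.symm.trans h2)
  have h1 := measure_iUnion (μ := Pm) hdisj fun s => measurableSet_coordEq 0 s
  rw [← huniv, measure_univ] at h1
  rw [h1]
  exact tsum_congr fun s => (marginal p E hp hp1 hm hcq Pm hPm 0 s).symm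


/-- for every ℙ⁻-admissible cylinder W = [ξ₀,…,ξ_{N-1}],
ℙ⁻(Σ_n^W) → 0 as n → ∞. -/
theorem stmt13 (p : ℕ → ℝ) (E : ℝ)
    (hp : ∀ n, 0 ≤ p n) (hp1 : HasSum p 1) (hp0 : 0 < p 0)
    (hmean : Summable fun n : ℕ => (n : ℝ) * p n)
    (hE : E = ∑' n : ℕ, (n : ℝ) * p n)
    (hsupp : ∀ N : ℕ, ∃ n, N ≤ n ∧ 0 < p n)
    (Pm : Measure (ℕ → ℕ)) [IsProbabilityMeasure Pm]
    (hPm : ∀ n, 1 ≤ n → ∀ ξ : ℕ → ℕ, Pm (cyl ξ n) = ENNReal.ofReal (cylProbQ p E ξ n))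
    (N : ℕ) (hN : 1 ≤ N) (ξ : ℕ → ℕ) (hW : 0 < Pm (cyl ξ N)) :
    Tendsto (fun n => Pm (SigW ξ N n)) atTop (𝓝 0) := by
  classical
  -- basic positivity facts
  have hsum : Summable p := hp1.summable
  have hE0 : 0 ≤ E := by
    rw [hE]; exact tsum_nonneg fun n => mul_nonneg (Nat.cast_nonneg n) (hp n)
  have hE1 : (0:ℝ) < 1 + E := by linarith
  have ht : ∀ i, 0 < tailSum p i := tailSum_pos hp hsum hsupp
  have hm : ∀ i, 0 < mdist p E i := fun i => div_pos (ht i) hE1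
  have hPt : ∀ i j, 0 ≤ Ptrans p i j := by
    intro i j
    unfold Ptrans
    split
    · exact hp j
    · split
      · norm_num
      · exact le_refl 0
  have hq0 : ∀ i j, 0 ≤ qtrans p E i j := fun i j =>
    mul_nonneg (div_nonneg (hm j).le (hm i).le) (hPt j i)
  have hcq : ∀ (ζ : ℕ → ℕ) (n : ℕ), 0 ≤ cylProbQ p E ζ n := fun ζ n =>
    mul_nonneg (hm _).le (Finset.prod_nonneg fun i _ => hq0 _ _)
  have hqup : ∀ i, 0 < qtrans p E i (i + 1) := by
    intro i
    have hPt1 : Ptrans p (i + 1) i = 1 := by simp [Ptrans]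
    unfold qtrans
    rw [hPt1, mul_one]
    exact div_pos (hm _) (hm _)
  have hqz : ∀ i, 0 < p i → 0 < qtrans p E i 0 := by
    intro i hpi
    have hPt1 : Ptrans p 0 i = p i := by simp [Ptrans]
    unfold qtrans
    rw [hPt1]
    exact mul_pos (div_pos (hm 0) (hm i)) hpi
  -- admissibility of ξ
  have hWpos : 0 < cylProbQ p E ξ N := by
    have h := hPm N hN ξ
    rw [h] at hW
    exact ENNReal.ofReal_pos.1 hW
  have hqξ : ∀ k, k < N - 1 → 0 < qtrans p E (ξ k) (ξ (k + 1)) := by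
    intro k hk
    rcases lt_or_eq_of_le (hq0 (ξ k) (ξ (k + 1))) with h | h
    · exact h
    · exfalso
      have hz : cylProbQ p E ξ N = 0 := by
        unfold cylProbQ
        rw [Finset.prod_eq_zero (Finset.mem_range.2 hk) h.symm, mul_zero]
      linarith
  -- SigW facts
  have hSigdet : ∀ n, ∀ ω ω' : ℕ → ℕ, (∀ i < n * N, ω i = ω' i) →
      ω ∈ SigW ξ N n → ω' ∈ SigW ξ N n := by
    intro n ω ω' hag h i hi hblock
    refine h i hi fun k hk => ?_
    have hlt : i * N + k < n * N := by
      have h1 : (i + 1) * N ≤ n * N := Nat.mul_le_mul_right N hi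
      have h2 : (i + 1) * N = i * N + N := by ring
      omega
    rw [hag (i * N + k) hlt]
    exact hblock k hk
  have hSig_meas : ∀ n, MeasurableSet (SigW ξ N n) := by
    intro n
    have hrw : SigW ξ N n
        = ⋂ (i : ℕ) (_ : i < n), {ω : ℕ → ℕ | ∀ k < N, ω (i * N + k) = ξ k}ᶜ := by
      ext ω; simp [SigW]
    rw [hrw]
    exact MeasurableSet.iInter fun i => MeasurableSet.iInter fun _ =>
      (measurableSet_forall_coord ξ (fun k => i * N + k) N).compl
  have hmono : ∀ n n', n ≤ n' → SigW ξ N n' ⊆ SigW ξ N n :=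
    fun n n' h ω hω i hi => hω i (lt_of_lt_of_le hi h)
  -- key quantitative estimate
  have key : ∀ ε : ℝ, 0 < ε → ∃ n0 : ℕ, ∀ n ≥ n0, Pm (SigW ξ N n) ≤ ENNReal.ofReal ε := by
    intro ε hε
    set ε₁ : ℝ := ε / 2 with hε₁def
    have hε₁ : 0 < ε₁ := by positivity
    -- choose M
    have htsum1 : ∑' s : ℕ, ENNReal.ofReal (mdist p E s) = 1 :=
      tsum_marg p E hp hp1 hm hcq Pm hPm
    obtain ⟨F, hF⟩ : ∃ F : Finset ℕ,
        1 - ENNReal.ofReal ε₁ < ∑ s ∈ F, ENNReal.ofReal (mdist p E s) := by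
      have h1 : (1 : ENNReal) - ENNReal.ofReal ε₁ < 1 := by
        apply ENNReal.sub_lt_self ENNReal.one_ne_top one_ne_zero
        simpa using (ENNReal.ofReal_pos.2 hε₁).ne'
      have h2 : (1:ENNReal) - ENNReal.ofReal ε₁
          < ⨆ F : Finset ℕ, ∑ s ∈ F, ENNReal.ofReal (mdist p E s) := by
        rw [← ENNReal.tsum_eq_iSup_sum, htsum1]
        exact h1
      exact lt_iSup_iff.1 h2
    set M := F.sup id with hMdef
    have hFsub : F ⊆ Finset.range (M + 1) := by
      intro s hs
      have := Finset.le_sup (f := id) hs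
      simp only [id] at this
      exact Finset.mem_range.2 (by omega)
    -- tail bound
    have hDk : ∀ k : ℕ, Pm (⋃ s ∈ Finset.range (M + 1), {ω : ℕ → ℕ | ω k = s})
        = ∑ s ∈ Finset.range (M + 1), ENNReal.ofReal (mdist p E s) := by
      intro k
      rw [measure_biUnion_finset ?_ (fun s _ => measurableSet_coordEq k s)]
      · exact Finset.sum_congr rfl fun s _ => marginal p E hp hp1 hm hcq Pm hPm k s
      · intro s _ s' _ hss
        exact Set.disjoint_left.2 fun ω h1 h2 => hss (h1.symm.trans h2)
    have htail : ∀ k : ℕ, Pm {ω : ℕ → ℕ | M < ω k} ≤ ENNReal.ofReal ε₁ := by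
      intro k
      have hcompl : {ω : ℕ → ℕ | M < ω k}
          = (⋃ s ∈ Finset.range (M + 1), {ω : ℕ → ℕ | ω k = s})ᶜ := by
        ext ω
        simp only [Set.mem_setOf_eq, Set.mem_compl_iff, Set.mem_iUnion, Finset.mem_range,
          exists_prop, not_exists, not_and]
        constructor
        · intro h s hs1 hs2
          omega
        · intro h
          by_contra hc
          exact h (ω k) (by omega) rfl
      have hmeasD : MeasurableSet (⋃ s ∈ Finset.range (M + 1), {ω : ℕ → ℕ | ω k = s}) :=
        MeasurableSet.biUnion (Finset.range (M + 1)).countable_toSet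
          fun s _ => measurableSet_coordEq k s
      rw [hcompl, measure_compl hmeasD (measure_ne_top _ _), measure_univ, hDk k]
      have hge : 1 - ENNReal.ofReal ε₁ ≤ ∑ s ∈ Finset.range (M + 1), ENNReal.ofReal (mdist p E s) :=
        le_trans hF.le (Finset.sum_le_sum_of_subset hFsub)
      have h3 : (1:ENNReal) ≤ ∑ s ∈ Finset.range (M + 1), ENNReal.ofReal (mdist p E s)
          + ENNReal.ofReal ε₁ := tsub_le_iff_right.mp hge
      exact tsub_le_iff_right.mpr (by rwa [add_comm] at h3)
    -- choose S and constants
    obtain ⟨S, hMS, hpS⟩ := hsupp M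
    set B := (ξ 0 + S + 1) * N with hBdef
    have hB : ξ 0 + S + 1 ≤ B := Nat.le_mul_of_pos_right _ (by omega)
    set K := ξ 0 + S + 2 with hKdef
    have hK1 : 1 ≤ K := by omega
    -- path probabilities
    set d : ℕ → ℝ := fun s => ∏ r ∈ Finset.range (B + N),
      qtrans p E (wseq s (pathv ξ B S s) r) (wseq s (pathv ξ B S s) (r + 1)) with hddef
    have hdpos : ∀ s ≤ M, 0 < d s := fun s hs =>
      path_pos p E hqup hqz hp0 N hN ξ hqξ B S hB hpS s (le_trans hs hMS)
    have hne : (Finset.range (M + 1)).Nonempty := ⟨0, Finset.mem_range.2 (by omega)⟩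
    set δ : ℝ := min ((Finset.range (M + 1)).inf' hne d) (1 / 2) with hδdef
    have hδpos : 0 < δ := by
      apply lt_min
      · exact (Finset.lt_inf'_iff hne).2 fun s hs => hdpos s (by
          have := Finset.mem_range.1 hs; omega)
      · norm_num
    have hδd : ∀ s ≤ M, δ ≤ d s := fun s hs =>
      le_trans (min_le_left _ _) (Finset.inf'_le d (Finset.mem_range.2 (by omega)))
    have hδhalf : δ ≤ 1 / 2 := min_le_right _ _
    -- recursion step
    have hrec : ∀ n, 1 ≤ n → (Pm (SigW ξ N (n + K))).toReal
        ≤ (1 - δ) * (Pm (SigW ξ N n)).toReal + δ * ε₁ := by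
      intro n hn
      set L := n * N with hLdef
      have hL1 : 1 ≤ L := by
        have := Nat.mul_le_mul hn hN
        simpa [hLdef] using this
      set As : ℕ → Set (ℕ → ℕ) := fun s => SigW ξ N n ∩ {ω : ℕ → ℕ | ω (L - 1) = s} with hAsdef
      set Ps : ℕ → Set (ℕ → ℕ) := fun s => As s ∩ contEv L (pathv ξ B S s) (B + N) with hPsdef
      have hAs_meas : ∀ s, MeasurableSet (As s) := fun s =>
        (hSig_meas n).inter (measurableSet_coordEq _ _)
      have hPs_meas : ∀ s, MeasurableSet (Ps s) := fun s =>
        (hAs_meas s).inter (measurableSet_contEv _ _ _)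
      have hcond : ∀ s, Pm (Ps s) = Pm (As s) * ENNReal.ofReal (d s) := by
        intro s
        exact cond_prob p E hcq Pm hPm L hL1 (As s)
          (fun ω ω' hag hω => ⟨hSigdet n ω ω' (fun i hi => hag i hi) hω.1, by
            have h1 := hag (L - 1) (by omega)
            show ω' (L - 1) = s
            rw [← h1]
            exact hω.2⟩)
          s (fun ω hω => hω.2) (pathv ξ B S s) (B + N)
      have hPsdisj : ∀ s, Disjoint (SigW ξ N (n + K)) (Ps s) := by
        intro s
        rw [Set.disjoint_right]
        intro ω hω hSig
        have hblock : ∀ k < N, ω ((n + K - 1) * N + k) = ξ k := by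
          intro k hk
          have hco : (n + K - 1) * N + k = L + (B + k) := by
            have h1 : n + K - 1 = n + (ξ 0 + S + 1) := by omega
            rw [h1, add_mul, hLdef, hBdef]
            omega
          have h2 := hω.2 (B + k) (by omega)
          rw [hco, h2, path_end ξ B S s hB k]
        exact hSig (n + K - 1) (by omega) hblock
      set D : Set (ℕ → ℕ) := ⋃ s ∈ Finset.range (M + 1), {ω : ℕ → ℕ | ω (L - 1) = s} with hDdef
      set PU : Set (ℕ → ℕ) := ⋃ s ∈ Finset.range (M + 1), Ps s with hPUdef
      have hPU_meas : MeasurableSet PU :=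
        MeasurableSet.biUnion (Finset.range (M + 1)).countable_toSet fun s _ => hPs_meas s
      have hD_meas : MeasurableSet D :=
        MeasurableSet.biUnion (Finset.range (M + 1)).countable_toSet
          fun s _ => measurableSet_coordEq _ _
      -- (i)
      have hi : Pm (SigW ξ N (n + K)) + Pm PU ≤ Pm (SigW ξ N n) := by
        have hdisj : Disjoint (SigW ξ N (n + K)) PU := by
          rw [hPUdef]
          exact Set.disjoint_iUnion_right.2 fun s =>
            Set.disjoint_iUnion_right.2 fun _ => hPsdisj s
        have hsub : SigW ξ N (n + K) ∪ PU ⊆ SigW ξ N n := by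
          apply Set.union_subset
          · exact hmono n (n + K) (by omega)
          · exact Set.iUnion₂_subset fun s _ ω hω => hω.1.1
        calc Pm (SigW ξ N (n + K)) + Pm PU = Pm (SigW ξ N (n + K) ∪ PU) :=
              (measure_union hdisj hPU_meas).symm
          _ ≤ Pm (SigW ξ N n) := measure_mono hsub
      -- (ii)
      have hii : ENNReal.ofReal δ * Pm (SigW ξ N n ∩ D) ≤ Pm PU := by
        have hPUeq : Pm PU = ∑ s ∈ Finset.range (M + 1), Pm (Ps s) := by
          rw [hPUdef]
          apply measure_biUnion_finset
          · intro s _ s' _ hss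
            refine Set.disjoint_left.2 fun ω h1 h2 => hss ?_
            exact (h1.1.2.symm.trans h2.1.2)
          · exact fun s _ => hPs_meas s
        have hSDeq : SigW ξ N n ∩ D = ⋃ s ∈ Finset.range (M + 1), As s := by
          rw [hDdef, Set.inter_iUnion₂]
        have hSDm : Pm (SigW ξ N n ∩ D) = ∑ s ∈ Finset.range (M + 1), Pm (As s) := by
          rw [hSDeq]
          apply measure_biUnion_finset
          · intro s _ s' _ hss
            refine Set.disjoint_left.2 fun ω h1 h2 => hss ?_
            exact (h1.2.symm.trans h2.2)
          · exact fun s _ => hAs_meas s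
        rw [hPUeq, hSDm, Finset.mul_sum]
        apply Finset.sum_le_sum
        intro s hs
        rw [hcond s, mul_comm]
        exact mul_le_mul_right (ENNReal.ofReal_le_ofReal
          (hδd s (by have := Finset.mem_range.1 hs; omega))) _
      -- (iii)
      have hiii : Pm (SigW ξ N n) ≤ Pm (SigW ξ N n ∩ D) + ENNReal.ofReal ε₁ := by
        have hsub : SigW ξ N n ⊆ (SigW ξ N n ∩ D) ∪ {ω : ℕ → ℕ | M < ω (L - 1)} := by
          intro ω hω
          by_cases hωD : ω ∈ D
          · exact Or.inl ⟨hω, hωD⟩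
          · right
            simp only [hDdef, Set.mem_iUnion, Finset.mem_range, exists_prop, not_exists,
              not_and, Set.mem_setOf_eq] at hωD
            show M < ω (L - 1)
            by_contra hc
            exact hωD (ω (L - 1)) (by omega) rfl
        calc Pm (SigW ξ N n)
            ≤ Pm ((SigW ξ N n ∩ D) ∪ {ω : ℕ → ℕ | M < ω (L - 1)}) := measure_mono hsub
          _ ≤ Pm (SigW ξ N n ∩ D) + Pm {ω : ℕ → ℕ | M < ω (L - 1)} := measure_union_le _ _
          _ ≤ Pm (SigW ξ N n ∩ D) + ENNReal.ofReal ε₁ := add_le_add_right (htail (L - 1)) _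
      -- pass to reals
      have hfin : ∀ (A : Set (ℕ → ℕ)), Pm A ≠ ⊤ := fun A => measure_ne_top _ _
      have hir : (Pm (SigW ξ N (n + K))).toReal + (Pm PU).toReal ≤ (Pm (SigW ξ N n)).toReal := by
        rw [← ENNReal.toReal_add (hfin _) (hfin _)]
        exact ENNReal.toReal_mono (hfin _) hi
      have hiir : δ * (Pm (SigW ξ N n ∩ D)).toReal ≤ (Pm PU).toReal := by
        have := ENNReal.toReal_mono (hfin _) hii
        rwa [ENNReal.toReal_mul, ENNReal.toReal_ofReal hδpos.le] at this
      have hiiir : (Pm (SigW ξ N n)).toReal ≤ (Pm (SigW ξ N n ∩ D)).toReal + ε₁ := by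
        have := ENNReal.toReal_mono (by
          exact ENNReal.add_ne_top.2 ⟨hfin _, ENNReal.ofReal_ne_top⟩) hiii
        rwa [ENNReal.toReal_add (hfin _) ENNReal.ofReal_ne_top,
          ENNReal.toReal_ofReal hε₁.le] at this
      have haux : δ * ((Pm (SigW ξ N n)).toReal - ε₁) ≤ δ * (Pm (SigW ξ N n ∩ D)).toReal :=
        mul_le_mul_of_nonneg_left (by linarith) hδpos.le
      linarith
    -- iterate
    have hone : ∀ n, (Pm (SigW ξ N n)).toReal ≤ 1 := by
      intro n
      have h := prob_le_one (μ := Pm) (s := SigW ξ N n)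
      have := ENNReal.toReal_mono ENNReal.one_ne_top h
      simpa using this
    have hiter : ∀ j : ℕ, (Pm (SigW ξ N (1 + j * K))).toReal ≤ (1 - δ) ^ j + ε₁ := by
      intro j
      induction j with
      | zero =>
        have h := hone (1 + 0 * K)
        have he : (1 - δ) ^ 0 + ε₁ = 1 + ε₁ := by norm_num
        rw [he]
        linarith
      | succ j ih =>
        have hidx : 1 + (j + 1) * K = (1 + j * K) + K := by ring
        rw [hidx]
        have h1 := hrec (1 + j * K) (by omega)
        have h2 : (1 - δ) * (Pm (SigW ξ N (1 + j * K))).toReal ≤ (1 - δ) * ((1 - δ) ^ j + ε₁) :=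
          mul_le_mul_of_nonneg_left ih (by linarith)
        calc (Pm (SigW ξ N ((1 + j * K) + K))).toReal
            ≤ (1 - δ) * ((1 - δ) ^ j + ε₁) + δ * ε₁ := by linarith
          _ = (1 - δ) ^ (j + 1) + ε₁ := by ring
    obtain ⟨j0, hj0⟩ := exists_pow_lt_of_lt_one hε₁ (show 1 - δ < 1 by linarith)
    refine ⟨1 + j0 * K, fun n hn => ?_⟩
    have hxn : (Pm (SigW ξ N n)).toReal ≤ ε := by
      have hmn := measure_mono (μ := Pm) (hmono (1 + j0 * K) n hn)
      have h1 := ENNReal.toReal_mono (measure_ne_top _ _) hmn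
      have h2 := hiter j0
      have : ε₁ + ε₁ = ε := by rw [hε₁def]; ring
      linarith
    calc Pm (SigW ξ N n) = ENNReal.ofReal ((Pm (SigW ξ N n)).toReal) :=
          (ENNReal.ofReal_toReal (measure_ne_top _ _)).symm
      _ ≤ ENNReal.ofReal ε := ENNReal.ofReal_le_ofReal hxn
  -- conclude
  rw [ENNReal.tendsto_atTop_zero]
  intro ε hε
  rcases eq_or_ne ε ⊤ with rfl | hεtop
  · exact ⟨0, fun n _ => le_top⟩
  · have hεr : 0 < ε.toReal := ENNReal.toReal_pos hε.ne' hεtop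
    obtain ⟨n0, hn0⟩ := key ε.toReal hεr
    exact ⟨n0, fun n hn => le_trans (hn0 n hn) (by rw [ENNReal.ofReal_toReal hεtop])⟩

end
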